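/- Every Segal simplicial set is 2-Segal. -/

import Mathlib

open CategoryTheory Simplicial

universe u

namespace Seg

/-- Restriction of a simplex along a monotone map of standard simplices. -/
def res (X : SSet.{u}) {m n : ℕ} (f : Fin (m + 1) →o Fin (n + 1)) : X _⦋n⦌ → X _⦋m⦌ :=
  X.map (SimplexCategory.mkHom f).op

/-- The monotone injection `[l] → [n]`, `k ↦ i + k`, i.e. the inclusion of the
interval `{i, i+1, …, i+l}` into `{0, …, n}`. -/
def interval {n : ℕ} (i l : ℕ) (h : i + l ≤ n) : Fin (l + 1) →o Fin (n + 1) where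
  toFun k := ⟨i + k.1, by have := k.isLt; omega⟩
  monotone' := by
    intro a b hab
    have h' : a.1 ≤ b.1 := hab
    simp only [Fin.mk_le_mk]
    omega

/-- The monotone injection with image `{0,…,i} ∪ {j,…,n}` (where `i < j ≤ n`). -/
def outer {n : ℕ} (i j : ℕ) (hij : i < j) (hj : j ≤ n) :
    Fin (n - (j - i) + 2) →o Fin (n + 1) where
  toFun k := ⟨if k.1 ≤ i then k.1 else k.1 + (j - i) - 1, by have := k.isLt; split <;> omega⟩
  monotone' := by
    intro a b hab
    have h' : a.1 ≤ b.1 := hab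
    have ha := a.isLt
    have hb := b.isLt
    simp only [Fin.mk_le_mk]
    split_ifs <;> omega

/-- The monotone map `[1] → [l]` sending `0 ↦ 0` and `1 ↦ l`. -/
def ends (l : ℕ) : Fin 2 →o Fin (l + 1) where
  toFun k := ⟨k.1 * l, by
    have hk : k.1 ≤ 1 := Nat.lt_succ_iff.mp k.isLt
    have h2 : k.1 * l ≤ 1 * l := Nat.mul_le_mul hk (le_refl l)
    omega⟩
  monotone' := by
    intro a b hab
    have h' : a.1 ≤ b.1 := hab
    simp only [Fin.mk_le_mk]
    exact Nat.mul_le_mul h' (le_refl l)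

/-- The map `[0] → [n]` picking out the vertex `i`. -/
def vert {n : ℕ} (i : ℕ) (h : i ≤ n) : Fin 1 →o Fin (n + 1) where
  toFun _ := ⟨i, by omega⟩
  monotone' := fun _ _ _ => le_refl _

/-- The monotone surjection `[m+1] → [m]` hitting `i` twice; restriction along it is the
degeneracy `s_i : X_m → X_{m+1}`. -/
def degen {m : ℕ} (i : ℕ) (h : i ≤ m) : Fin (m + 2) →o Fin (m + 1) where
  toFun k := ⟨if k.1 ≤ i then k.1 else k.1 - 1, by have := k.isLt; split <;> omega⟩
  monotone' := by
    intro a b hab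
    have h' : a.1 ≤ b.1 := hab
    simp only [Fin.mk_le_mk]
    split_ifs <;> omega

/-- The 2-Segal map associated to `0 ≤ i < j ≤ n`, i.e. the canonical map
`X_n → X_{{0,…,i}∪{j,…,n}} ×_{X_{{i,j}}} X_{{i,…,j}}`, is a bijection.  (A map into a
fiber product of sets is a bijection iff every compatible pair has a unique preimage.) -/
def TwoSegalMapBij (X : SSet.{u}) (n i j : ℕ) (hij : i < j) (hj : j ≤ n) : Prop :=
  ∀ (a : X _⦋n - (j - i) + 1⦌) (b : X _⦋j - i⦌),
    res X (interval i 1 (by omega)) a = res X (ends (j - i)) b →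
    ∃! x : X _⦋n⦌,
      res X (outer i j hij hj) x = a ∧ res X (interval i (j - i) (by omega)) x = b

/-- A simplicial set is 2-Segal if all the 2-Segal maps are bijections. -/
def IsTwoSegal (X : SSet.{u}) : Prop :=
  ∀ (n i j : ℕ), 3 ≤ n → ∀ (hij : i < j) (hj : j ≤ n), TwoSegalMapBij X n i j hij hj

/-- A simplicial set is Segal (1-Segal) if for each `n ≥ 2` the map
`X_n → X_1 ×_{X_0} ⋯ ×_{X_0} X_1` (restriction to the edges `{k,k+1}`) is a bijection. -/
def IsSegal (X : SSet.{u}) : Prop :=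
  ∀ (n : ℕ), 2 ≤ n → ∀ e : Fin n → X _⦋1⦌,
    (∀ (k : ℕ) (hk : k + 1 < n),
      res X (vert 1 (le_refl 1)) (e ⟨k, by omega⟩) =
        res X (vert 0 (Nat.zero_le 1)) (e ⟨k + 1, hk⟩)) →
    ∃! x : X _⦋n⦌, ∀ k : Fin n, res X (interval k.1 1 (by have := k.isLt; omega)) x = e k

end Seg

namespace Seg
lemma res_res (X : SSet.{u}) {l m n : ℕ} (f : Fin (m + 1) →o Fin (n + 1))
    (g : Fin (l + 1) →o Fin (m + 1)) (x : X _⦋n⦌) :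
    res X g (res X f x) = res X (f.comp g) x := by
  simp only [res, ← FunctorToTypes.map_comp_apply, ← op_comp]
  rfl

lemma res_congr (X : SSet.{u}) {m n : ℕ} (f g : Fin (m + 1) →o Fin (n + 1))
    (hfg : ∀ k, (f k).1 = (g k).1) (x : X _⦋n⦌) : res X f x = res X g x := by
  have : f = g := by
    ext k
    exact hfg k
  rw [this]

lemma res_comp_eq (X : SSet.{u}) {l m n : ℕ} (f : Fin (m + 1) →o Fin (n + 1))
    (g : Fin (l + 1) →o Fin (m + 1)) (k : Fin (l + 1) →o Fin (n + 1))
    (hh : ∀ q, (f (g q)).1 = (k q).1) (x : X _⦋n⦌) :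
    res X g (res X f x) = res X k x := by
  rw [res_res]; exact res_congr X _ k hh x

lemma res_id (X : SSet.{u}) {m : ℕ} (f : Fin (m + 1) →o Fin (m + 1))
    (hf : ∀ k, (f k).1 = k.1) (x : X _⦋m⦌) : res X f x = x := by
  have : SimplexCategory.mkHom f = 𝟙 _ := by
    ext k
    exact hf k
  unfold res
  rw [this, op_id, X.map_id]
  rfl

lemma vert_edge (X : SSet.{u}) {m : ℕ} (x : X _⦋m⦌) (k t : ℕ) (hk : k + 1 ≤ m) (ht : t ≤ 1)
    (hkt : k + t ≤ m) :
    res X (vert t ht) (res X (interval k 1 hk) x) = res X (vert (k + t) hkt) x := by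
  apply res_comp_eq
  intro q
  simp [interval, vert, DFunLike.coe]

lemma vert_ends (X : SSet.{u}) {l : ℕ} (b : X _⦋l⦌) (t : ℕ) (ht : t ≤ 1) (hq : t * l ≤ l) :
    res X (vert t ht) (res X (ends l) b) = res X (vert (t * l) hq) b := by
  apply res_comp_eq
  intro q
  simp [ends, vert, DFunLike.coe]

lemma edges_inj (X : SSet.{u}) (h : IsSegal X) {m : ℕ} (hm : 1 ≤ m) (x y : X _⦋m⦌)
    (he : ∀ (k : ℕ) (hk : k + 1 ≤ m), res X (interval k 1 hk) x = res X (interval k 1 hk) y) :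
    x = y := by
  rcases Nat.lt_or_ge m 2 with h2 | h2
  · have hm1 : m = 1 := by omega
    subst hm1
    have h01 := he 0 (le_refl 1)
    rw [res_id X _ (fun k => by simp [interval]) x,
        res_id X _ (fun k => by simp [interval]) y] at h01
    exact h01
  · obtain ⟨z, hz, hzu⟩ := h m h2
      (fun k => res X (interval k.1 1 (by have := k.isLt; omega)) x)
      (fun k hk => by
        rw [vert_edge X x k 1 (by omega) (le_refl 1) (by omega),
            vert_edge X x (k+1) 0 (by omega) (Nat.zero_le 1) (by omega)])
    have hx := hzu x (fun k => rfl)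
    have hy := hzu y (fun k => (he k.1 _).symm)
    rw [hx, hy]

lemma vert_eq (X : SSet.{u}) {m : ℕ} (x : X _⦋m⦌) (p q : ℕ) (hp : p ≤ m) (hq : q ≤ m)
    (hpq : p = q) : res X (vert p hp) x = res X (vert q hq) x :=
  res_congr X _ _ (fun k => by simp [vert, hpq, DFunLike.coe]) x

/-- Every Segal simplicial set is 2-Segal. -/
theorem segal_isTwoSegal (X : SSet.{u}) (h : IsSegal X) : IsTwoSegal X := by
  intro n i j hn hij hj a b hab
  -- The family of elementary edges of the desired simplex.
  let e : Fin n → X _⦋1⦌ := fun k =>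
    if hk : k.1 < i then res X (interval k.1 1 (by omega)) a
    else if hk2 : k.1 < j then res X (interval (k.1 - i) 1 (by omega)) b
    else res X (interval (k.1 - (j - i) + 1) 1 (by have := k.isLt; omega)) a
  have he_lt : ∀ (k : ℕ) (hkn : k < n) (hk : k < i),
      e ⟨k, hkn⟩ = res X (interval k 1 (by omega)) a := by
    intro k hkn hk
    simp only [e]
    rw [dif_pos hk]
  have he_mid : ∀ (k : ℕ) (hkn : k < n) (hk1 : i ≤ k) (hk2 : k < j),
      e ⟨k, hkn⟩ = res X (interval (k - i) 1 (by omega)) b := by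
    intro k hkn hk1 hk2
    simp only [e]
    rw [dif_neg (by omega), dif_pos hk2]
  have he_ge : ∀ (k : ℕ) (hkn : k < n) (hk : j ≤ k),
      e ⟨k, hkn⟩ = res X (interval (k - (j - i) + 1) 1 (by omega)) a := by
    intro k hkn hk
    simp only [e]
    rw [dif_neg (by omega), dif_neg (by omega)]
  -- vertex identities coming from the compatibility hypothesis
  have hab0 : res X (vert i (by omega)) a = res X (vert 0 (by omega)) b := by
    have h0 := congrArg (res X (vert 0 (Nat.zero_le 1))) hab
    rw [vert_edge X a i 0 (by omega) (Nat.zero_le 1) (by omega),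
        vert_ends X b 0 (Nat.zero_le 1) (by omega)] at h0
    exact (vert_eq X a i (i + 0) (by omega) (by omega) (by omega)).trans
      (h0.trans (vert_eq X b (0 * (j - i)) 0 (by omega) (by omega) (by omega)))
  have hab1 : res X (vert (i + 1) (by omega)) a = res X (vert (j - i) (by omega)) b := by
    have h0 := congrArg (res X (vert 1 (le_refl 1))) hab
    rw [vert_edge X a i 1 (by omega) (le_refl 1) (by omega),
        vert_ends X b 1 (le_refl 1) (by omega)] at h0
    exact h0.trans (vert_eq X b (1 * (j - i)) (j - i) (by omega) (by omega) (by omega))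
  -- compatibility of the edge family
  have hc : ∀ (k : ℕ) (hk : k + 1 < n),
      res X (vert 1 (le_refl 1)) (e ⟨k, by omega⟩) =
        res X (vert 0 (Nat.zero_le 1)) (e ⟨k + 1, hk⟩) := by
    intro k hk
    rcases Nat.lt_or_ge (k + 1) i with h1 | h1
    · rw [he_lt k (by omega) (by omega), he_lt (k + 1) (by omega) h1,
          vert_edge X a k 1 (by omega) (le_refl 1) (by omega),
          vert_edge X a (k + 1) 0 (by omega) (Nat.zero_le 1) (by omega)]
    · rcases Nat.lt_or_ge k i with h2 | h2
      · -- k + 1 = i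
        rw [he_lt k (by omega) h2, he_mid (k + 1) (by omega) (by omega) (by omega),
            vert_edge X a k 1 (by omega) (le_refl 1) (by omega),
            vert_edge X b (k + 1 - i) 0 (by omega) (Nat.zero_le 1) (by omega),
            vert_eq X a (k + 1) i (by omega) (by omega) (by omega), hab0]
        exact vert_eq X b 0 (k + 1 - i + 0) (by omega) (by omega) (by omega)
      · rcases Nat.lt_or_ge (k + 1) j with h3 | h3
        · rw [he_mid k (by omega) h2 (by omega), he_mid (k + 1) (by omega) (by omega) h3,
              vert_edge X b (k - i) 1 (by omega) (le_refl 1) (by omega),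
              vert_edge X b (k + 1 - i) 0 (by omega) (Nat.zero_le 1) (by omega)]
          exact vert_eq X b (k - i + 1) (k + 1 - i + 0) (by omega) (by omega) (by omega)
        · rcases Nat.lt_or_ge k j with h4 | h4
          · -- k + 1 = j
            rw [he_mid k (by omega) h2 h4, he_ge (k + 1) (by omega) h3,
                vert_edge X b (k - i) 1 (by omega) (le_refl 1) (by omega),
                vert_edge X a (k + 1 - (j - i) + 1) 0 (by omega) (Nat.zero_le 1) (by omega),
                vert_eq X b (k - i + 1) (j - i) (by omega) (by omega) (by omega), ← hab1]
            exact vert_eq X a (i + 1) (k + 1 - (j - i) + 1 + 0) (by omega) (by omega) (by omega)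
          · rw [he_ge k (by omega) h4, he_ge (k + 1) (by omega) (by omega),
                vert_edge X a (k - (j - i) + 1) 1 (by omega) (le_refl 1) (by omega),
                vert_edge X a (k + 1 - (j - i) + 1) 0 (by omega) (Nat.zero_le 1) (by omega)]
            exact vert_eq X a (k - (j - i) + 1 + 1) (k + 1 - (j - i) + 1 + 0)
              (by omega) (by omega) (by omega)
  obtain ⟨x, hx, hxu⟩ := h n (by omega) e hc
  have hxe : ∀ (k : ℕ) (hkn : k + 1 ≤ n),
      res X (interval k 1 hkn) x = e ⟨k, by omega⟩ := fun k hkn => hx ⟨k, by omega⟩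
  -- Step A: the inner face of x is b
  have hA : res X (interval i (j - i) (by omega)) x = b := by
    apply edges_inj X h (by omega)
    intro k hk
    rw [res_comp_eq X (interval i (j - i) (by omega)) (interval k 1 hk)
          (interval (i + k) 1 (by omega))
          (fun q => by have := q.isLt; simp only [interval, OrderHom.coe_mk, DFunLike.coe]; omega) x,
        hxe (i + k) (by omega), he_mid (i + k) (by omega) (by omega) (by omega)]
    exact res_congr X _ _ (fun q => by simp only [interval, OrderHom.coe_mk, DFunLike.coe]; omega) b
  -- Step B: the outer face of x is a
  have hB : res X (outer i j hij hj) x = a := by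
    apply edges_inj X h (by omega)
    intro m hm
    rcases Nat.lt_or_ge m i with hmi | hmi
    · rw [res_comp_eq X (outer i j hij hj) (interval m 1 hm) (interval m 1 (by omega))
            (fun q => by
              have := q.isLt
              simp only [interval, outer, OrderHom.coe_mk, DFunLike.coe]
              split <;> omega) x,
          hxe m (by omega), he_lt m (by omega) hmi]
    · rcases Nat.eq_or_lt_of_le hmi with heq | hlt
      · -- m = i : the long edge
        rw [res_comp_eq X (outer i j hij hj) (interval m 1 hm)
              ((interval i (j - i) (by omega)).comp (ends (j - i)))
              (fun q => by
                rcases q with ⟨qv, hqv⟩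
                interval_cases qv <;>
                  simp only [interval, outer, ends, OrderHom.comp_coe, OrderHom.coe_mk,
                    Function.comp_apply, DFunLike.coe, OrderHom.comp] <;> split <;> omega) x,
            ← res_res X (interval i (j - i) (by omega)) (ends (j - i)) x, hA, ← hab]
        exact res_congr X _ _ (fun q => by simp only [interval, OrderHom.coe_mk, DFunLike.coe]; omega) a
      · rw [res_comp_eq X (outer i j hij hj) (interval m 1 hm)
              (interval (m + (j - i) - 1) 1 (by omega))
              (fun q => by
                have := q.isLt
                simp only [interval, outer, OrderHom.coe_mk, DFunLike.coe]
                split <;> omega) x,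
            hxe (m + (j - i) - 1) (by omega), he_ge (m + (j - i) - 1) (by omega) (by omega)]
        exact res_congr X _ _ (fun q => by simp only [interval, OrderHom.coe_mk, DFunLike.coe]; omega) a
  refine ⟨x, ⟨hB, hA⟩, ?_⟩
  rintro y ⟨hya, hyb⟩
  apply hxu
  intro k
  obtain ⟨kv, hkv⟩ := k
  rcases Nat.lt_or_ge kv i with hk1 | hk1
  · rw [he_lt kv hkv hk1, ← hya,
        res_comp_eq X (outer i j hij hj) (interval kv 1 (by omega))
          (interval kv 1 (by omega))
          (fun q => by
            have := q.isLt
            simp only [interval, outer, OrderHom.coe_mk, DFunLike.coe]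
            split <;> omega) y]
  · rcases Nat.lt_or_ge kv j with hk2 | hk2
    · rw [he_mid kv hkv hk1 hk2, ← hyb,
          res_comp_eq X (interval i (j - i) (by omega)) (interval (kv - i) 1 (by omega))
            (interval kv 1 (by omega))
            (fun q => by simp only [interval, OrderHom.coe_mk, DFunLike.coe]; omega) y]
    · rw [he_ge kv hkv hk2, ← hya,
          res_comp_eq X (outer i j hij hj) (interval (kv - (j - i) + 1) 1 (by omega))
            (interval kv 1 (by omega))
            (fun q => by
              have := q.isLt
              simp only [interval, outer, OrderHom.coe_mk, DFunLike.coe]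
              split <;> omega) y]
end Seg
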